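/- Let φ_k denote the k-th orthonormal shifted Legendre polynomial on [0,1]. Then |x(1−x) φ_k'(x)| = O(k^{3/2}) and |x(1−x) φ_k''(x)| = O(k^{5/2}) uniformly over x ∈ [0,1]. -/

import Mathlib

/-- The `k`-th Legendre polynomial on [−1,1] (Rodrigues' formula). -/
noncomputable def legendreP (k : ℕ) : Polynomial ℝ :=
  ((1 : ℝ) / (2 ^ k * (k.factorial : ℝ))) •
    (Polynomial.derivative^[k] ((Polynomial.X ^ 2 - 1) ^ k))

/-- The `k`-th orthonormal shifted Legendre polynomial on [0,1]. -/
noncomputable def shiftedLegendre (k : ℕ) : ℝ → ℝ :=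
  fun x => Real.sqrt (2 * k + 1) * (legendreP k).eval (2 * x - 1)


open Polynomial

lemma factor_pow (k : ℕ) : (((X:ℝ[X])^2 - 1))^k = (X - C 1)^k * (X - C (-1))^k := by
  rw [← mul_pow]
  congr 1
  simp only [map_neg, C_1]
  ring

lemma eval_Dk_one (k : ℕ) :
    (derivative^[k] (((X:ℝ[X])^2 - 1)^k)).eval 1 = (k.factorial : ℝ) * 2^k := by
  rw [factor_pow, iterate_derivative_mul, eval_finset_sum]
  rw [Finset.sum_eq_single_of_mem 0 (Finset.mem_range.2 (by omega))]
  · simp only [Nat.choose_zero_right, one_smul, Nat.sub_zero, Function.iterate_zero, id_eq,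
      iterate_derivative_X_sub_pow_self, eval_mul]
    simp [eval_pow]
    norm_num
  · intro j hj hj0
    rw [iterate_derivative_X_sub_pow]
    have hjk : j ≤ k := by simpa using Nat.lt_succ_iff.mp (Finset.mem_range.1 hj)
    rw [show k - (k - j) = j from by omega]
    simp [eval_smul, eval_mul, eval_pow, zero_pow hj0]

lemma eval_Dk_negone (k : ℕ) :
    (derivative^[k] (((X:ℝ[X])^2 - 1)^k)).eval (-1) = (k.factorial : ℝ) * (-2)^k := by
  rw [factor_pow, iterate_derivative_mul, eval_finset_sum]
  rw [Finset.sum_eq_single_of_mem k (Finset.mem_range.2 (by omega))]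
  · simp only [Nat.choose_self, one_smul, Nat.sub_self, Function.iterate_zero, id_eq,
      iterate_derivative_X_sub_pow_self, eval_mul]
    simp [eval_pow]
    ring
  · intro j hj hjk
    rw [iterate_derivative_X_sub_pow k j (-1 : ℝ)]
    have hjk' : j ≤ k := by simpa using Nat.lt_succ_iff.mp (Finset.mem_range.1 hj)
    simp [eval_smul, eval_mul, eval_pow]
    exact Or.inr (Or.inr (by omega))

lemma eval_Dk1_one (k : ℕ) :
    (derivative^[k+1] (((X:ℝ[X])^2 - 1)^k)).eval 1
      = ((k+1) : ℝ) * (k.factorial : ℝ) * k * 2^(k-1) := by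
  rw [factor_pow, iterate_derivative_mul, eval_finset_sum]
  rw [Finset.sum_eq_single_of_mem 1 (Finset.mem_range.2 (by omega))]
  · rw [show k + 1 - 1 = k from rfl, iterate_derivative_X_sub_pow_self,
      iterate_derivative_X_sub_pow k 1 (-1:ℝ)]
    simp [eval_smul, eval_mul, eval_pow, Nat.descFactorial]
    norm_num
    ring
  · intro j hj hj1
    rcases Nat.eq_zero_or_pos j with rfl | hjpos
    · rw [Nat.sub_zero, iterate_derivative_X_sub_pow]
      simp [Nat.descFactorial_eq_zero_iff_lt.2 (Nat.lt_succ_self k)]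
    · have hjk : j ≤ k + 1 := by simpa using Nat.lt_succ_iff.mp (Finset.mem_range.1 hj)
      rw [iterate_derivative_X_sub_pow k (k+1-j) (1:ℝ)]
      rw [show k - (k + 1 - j) = j - 1 from by omega]
      simp [eval_smul, eval_mul, eval_pow]
      exact Or.inr (Or.inl (by omega))

lemma eval_Dk1_negone (k : ℕ) :
    (derivative^[k+1] (((X:ℝ[X])^2 - 1)^k)).eval (-1)
      = ((k+1) : ℝ) * (k.factorial : ℝ) * k * (-2)^(k-1) := by
  rw [factor_pow, iterate_derivative_mul, eval_finset_sum]
  rw [Finset.sum_eq_single_of_mem k (Finset.mem_range.2 (by omega))]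
  · rw [show k + 1 - k = 1 from by omega, iterate_derivative_X_sub_pow k 1 (1:ℝ),
      iterate_derivative_X_sub_pow_self k (-1:ℝ)]
    simp [eval_smul, eval_mul, eval_pow, Nat.descFactorial]
    norm_num
    ring
  · intro j hj hjk
    rcases Nat.lt_or_ge j k with hjlt | hjge
    · rw [iterate_derivative_X_sub_pow k j (-1:ℝ)]
      simp [eval_smul, eval_mul, eval_pow]
      exact Or.inr (Or.inr (by omega))
    · have : j = k + 1 := by
        have := Finset.mem_range.1 hj; omega
      subst this
      rw [iterate_derivative_X_sub_pow k (k+1) (-1:ℝ)]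
      simp [Nat.descFactorial_eq_zero_iff_lt.2 (Nat.lt_succ_self k)]


lemma two_pow_fact_ne (k : ℕ) : (2:ℝ)^k * (k.factorial : ℝ) ≠ 0 := by
  positivity

lemma legendreP_eval_one (k : ℕ) : (legendreP k).eval 1 = 1 := by
  unfold legendreP
  rw [eval_smul, eval_Dk_one]
  rw [smul_eq_mul, div_mul_eq_mul_div, one_mul, div_eq_iff (two_pow_fact_ne k)]
  ring

lemma legendreP_eval_negone (k : ℕ) : (legendreP k).eval (-1) = (-1)^k := by
  unfold legendreP
  rw [eval_smul, eval_Dk_negone]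
  rw [show ((-2:ℝ))^k = (-1)^k * 2^k from by rw [← mul_pow]; norm_num]
  rw [smul_eq_mul]
  field_simp

lemma legendreP_deriv (k : ℕ) : derivative (legendreP k)
    = ((1 : ℝ) / (2 ^ k * (k.factorial : ℝ))) • derivative^[k+1] (((X:ℝ[X])^2 - 1)^k) := by
  unfold legendreP
  rw [derivative_smul]
  congr 1
  exact (Function.iterate_succ_apply' derivative k _).symm

lemma legendreP_deriv_eval_one (k : ℕ) :
    (derivative (legendreP k)).eval 1 = (k:ℝ) * ((k:ℝ)+1) / 2 := by
  rw [legendreP_deriv, eval_smul, eval_Dk1_one]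
  rcases Nat.eq_zero_or_pos k with rfl | hk
  · norm_num
  · rw [show (2:ℝ)^(k-1) = 2^k / 2 from by
      rw [eq_div_iff (by norm_num), ← pow_succ]; congr 1; omega]
    rw [smul_eq_mul, div_mul_eq_mul_div, one_mul, div_eq_iff (two_pow_fact_ne k)]
    ring

lemma legendreP_deriv_eval_negone (k : ℕ) :
    (derivative (legendreP k)).eval (-1) = (-1)^(k-1) * ((k:ℝ) * ((k:ℝ)+1) / 2) := by
  rw [legendreP_deriv, eval_smul, eval_Dk1_negone]
  rcases Nat.eq_zero_or_pos k with rfl | hk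
  · norm_num
  · rw [show ((-2):ℝ)^(k-1) = (-1)^(k-1) * 2^k / 2 from by
      rw [show ((-2):ℝ) = (-1) * 2 by norm_num, mul_pow, mul_div_assoc]
      congr 1
      rw [eq_div_iff (by norm_num), ← pow_succ]; congr 1; omega]
    rw [smul_eq_mul, div_mul_eq_mul_div, one_mul, div_eq_iff (two_pow_fact_ne k)]
    ring
open Polynomial


lemma dX2_three : derivative^[3] ((X:ℝ[X])^2 - 1) = 0 := by
  show derivative (derivative (derivative _)) = 0
  simp [derivative_X_pow]

lemma dX2_ge (j : ℕ) (h : 3 ≤ j) : derivative^[j] ((X:ℝ[X])^2 - 1) = 0 := by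
  obtain ⟨m, rfl⟩ : ∃ m, j = m + 3 := ⟨j - 3, by omega⟩
  rw [Function.iterate_add_apply, dX2_three]
  simp

lemma key0 (k : ℕ) :
    ((X:ℝ[X])^2 - 1) * derivative (((X:ℝ[X])^2 - 1)^k) =
      C (2*(k:ℝ)) * (X * ((X:ℝ[X])^2 - 1)^k) := by
  cases k with
  | zero => simp
  | succ n =>
    rw [derivative_pow]
    simp only [derivative_sub, derivative_one, derivative_X_pow]
    push_cast
    ring_nf
    simp only [C_add, C_mul, C_1]
    ring

lemma dX_ge (j : ℕ) (h : 2 ≤ j) : derivative^[j] (X:ℝ[X]) = 0 := by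
  obtain ⟨m, rfl⟩ : ∃ m, j = m + 2 := ⟨j - 2, by omega⟩
  rw [Function.iterate_add_apply]
  have : derivative^[2] (X:ℝ[X]) = 0 := by
    show derivative (derivative _) = 0; simp
  rw [this]; simp

lemma ode_w (k : ℕ) (hk : 1 ≤ k) :
    ((X:ℝ[X])^2 - 1) * derivative^[k+2] (((X:ℝ[X])^2 - 1)^k)
      + C 2 * X * derivative^[k+1] (((X:ℝ[X])^2 - 1)^k)
      = C ((k:ℝ)*(k+1)) * derivative^[k] (((X:ℝ[X])^2 - 1)^k) := by
  set w : ℝ[X] := ((X:ℝ[X])^2 - 1)^k with hw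
  have h1 := congrArg (derivative^[k+1]) (key0 k)
  rw [mul_comm ((X:ℝ[X])^2 - 1) (derivative w)] at h1
  rw [iterate_derivative_mul] at h1
  have hL : ∑ j ∈ Finset.range (k+1).succ,
      (k+1).choose j • (derivative^[k+1-j] (derivative w) * derivative^[j] ((X:ℝ[X])^2-1)) =
      ∑ j ∈ Finset.range 3,
      (k+1).choose j • (derivative^[k+1-j] (derivative w) * derivative^[j] ((X:ℝ[X])^2-1)) := by
    refine (Finset.sum_subset (Finset.range_subset_range.2 (by omega)) (fun j _ hj => ?_)).symm
    rw [dX2_ge j (by simp at hj; omega)]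
    simp
  rw [hL] at h1
  have hR : derivative^[k+1] (C (2*(k:ℝ)) * (X * w)) =
      C (2*(k:ℝ)) * ∑ j ∈ Finset.range (k+1).succ,
        (k+1).choose j • (derivative^[k+1-j] w * derivative^[j] (X:ℝ[X])) := by
    rw [iterate_derivative_C_mul, mul_comm (X:ℝ[X]) w, iterate_derivative_mul]
  rw [hR] at h1
  have hR2 : ∑ j ∈ Finset.range (k+1).succ,
      (k+1).choose j • (derivative^[k+1-j] w * derivative^[j] (X:ℝ[X])) =
      ∑ j ∈ Finset.range 2,
      (k+1).choose j • (derivative^[k+1-j] w * derivative^[j] (X:ℝ[X])) := by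
    refine (Finset.sum_subset (Finset.range_subset_range.2 (by omega)) (fun j _ hj => ?_)).symm
    rw [dX_ge j (by simp at hj; omega)]
    simp
  rw [hR2] at h1
  simp only [Finset.sum_range_succ, Finset.sum_range_zero, Nat.choose_zero_right,
    Nat.choose_one_right, one_smul, Nat.sub_zero] at h1
  -- now massage h1 into the goal
  have e1 : derivative^[k+1-1] (derivative w) = derivative^[k+1] w := by
    rw [← Function.iterate_succ_apply]; first | rfl | (congr 1; omega)
  have e2 : derivative^[k+1-2] (derivative w) = derivative^[k] w := by
    rw [← Function.iterate_succ_apply]; first | rfl | (congr 1; omega)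
  have e3 : derivative^[k+1] (derivative w) = derivative^[k+2] w := by
    rw [← Function.iterate_succ_apply]
  have d0 : derivative^[0] ((X:ℝ[X])^2-1) = (X:ℝ[X])^2-1 := rfl
  have d1 : derivative^[1] ((X:ℝ[X])^2-1) = C 2 * X := by
    show derivative _ = _
    simp only [derivative_sub, derivative_one, derivative_X_pow, sub_zero]
    norm_num
  have d2 : derivative^[2] ((X:ℝ[X])^2-1) = C 2 := by
    show derivative (derivative _) = _; simp [derivative_X_pow]; rw [one_add_one_eq_two, map_ofNat]
  have dx0 : derivative^[0] (X:ℝ[X]) = X := rfl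
  have dx1 : derivative^[1] (X:ℝ[X]) = 1 := by show derivative _ = _; exact derivative_X
  rw [e1, e2, e3, d0, d1, d2, dx0, dx1] at h1
  have hC : ((((k+1).choose 2 : ℕ)) : ℝ[X]) * 2 = (k:ℝ[X]) * ((k:ℝ[X])+1) := by
    have h2 : ((k+1).choose 2) * 2 = k * (k+1) := by
      rw [Nat.choose_two_right, Nat.add_sub_cancel]
      have hdvd : 2 ∣ (k+1) * k := by
        rcases Nat.even_mul_succ_self k with ⟨m, hm⟩
        exact ⟨m, by rw [Nat.mul_comm, hm, Nat.two_mul]⟩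
      rw [Nat.div_mul_cancel hdvd, Nat.mul_comm]
    calc ((((k+1).choose 2 : ℕ)) : ℝ[X]) * 2 = (((((k+1).choose 2) * 2 : ℕ)) : ℝ[X]) := by push_cast; ring
    _ = (((k * (k+1) : ℕ)) : ℝ[X]) := by rw [h2]
    _ = (k:ℝ[X]) * ((k:ℝ[X])+1) := by push_cast; ring
  rw [nsmul_eq_mul, nsmul_eq_mul, nsmul_eq_mul] at h1
  have e4 : derivative^[k+1-1] w = derivative^[k] w := by
    congr 1
  rw [e4] at h1
  have hCC : (Polynomial.C (2*(k:ℝ)) : ℝ[X]) = 2 * (k:ℝ[X]) := by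
    rw [map_mul, C_eq_natCast, map_ofNat]
  have hB : (Polynomial.C ((k:ℝ)*((k:ℝ)+1)) : ℝ[X]) = (k:ℝ[X]) * ((k:ℝ[X])+1) := by
    rw [map_mul, map_add]; simp
  have hD : (Polynomial.C (2:ℝ) : ℝ[X]) = 2 := map_ofNat _ 2
  rw [hCC, hD] at h1
  push_cast at h1
  rw [hD, hB]
  push_cast
  linear_combination h1 - (derivative^[k] w) * hC

lemma legendreP_deriv2 (k : ℕ) : derivative (derivative (legendreP k))
    = ((1 : ℝ) / (2 ^ k * (k.factorial : ℝ))) • derivative^[k+2] (((X:ℝ[X])^2 - 1)^k) := by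
  rw [legendreP_deriv, derivative_smul]
  congr 1
  exact (Function.iterate_succ_apply' derivative (k+1) _).symm

lemma legendre_ode (k : ℕ) :
    ((X:ℝ[X])^2 - 1) * derivative (derivative (legendreP k)) + 2 * X * derivative (legendreP k)
      = C ((k:ℝ)*((k:ℝ)+1)) * legendreP k := by
  rcases Nat.eq_zero_or_pos k with rfl | hk
  · simp [legendreP]
  · have h := ode_w k hk
    rw [map_ofNat] at h
    rw [legendreP_deriv2, legendreP_deriv]
    unfold legendreP
    rw [smul_eq_C_mul, smul_eq_C_mul, smul_eq_C_mul]
    linear_combination (C ((1:ℝ)/(2^k * k.factorial))) * h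

lemma eval_nonneg_deriv_bound {F : ℝ[X]} {a b : ℝ} (hab : a ≤ b)
    (h : ∀ x ∈ Set.Ioo a b, 0 ≤ (derivative F).eval x) :
    ∀ x ∈ Set.Icc a b, F.eval x ≤ F.eval b := by
  intro x hx
  have mono : MonotoneOn (fun t => F.eval t) (Set.Icc a b) := by
    apply monotoneOn_of_deriv_nonneg (convex_Icc a b) F.continuous.continuousOn
      ((F.differentiable).differentiableOn)
    intro t ht
    rw [interior_Icc] at ht
    rw [Polynomial.deriv]
    exact h t ht
  exact mono hx (Set.right_mem_Icc.2 hab) hx.2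

lemma eval_nonpos_deriv_bound {F : ℝ[X]} {a b : ℝ} (hab : a ≤ b)
    (h : ∀ x ∈ Set.Ioo a b, (derivative F).eval x ≤ 0) :
    ∀ x ∈ Set.Icc a b, F.eval x ≤ F.eval a := by
  intro x hx
  have mono : AntitoneOn (fun t => F.eval t) (Set.Icc a b) := by
    apply antitoneOn_of_deriv_nonpos (convex_Icc a b) F.continuous.continuousOn
      ((F.differentiable).differentiableOn)
    intro t ht
    rw [interior_Icc] at ht
    rw [Polynomial.deriv]
    exact h t ht
  exact mono (Set.left_mem_Icc.2 hab) hx hx.1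

lemma sum_bound (k : ℕ) {y : ℝ} (hy : y ∈ Set.Icc (-1:ℝ) 1) :
    ((k:ℝ)*((k:ℝ)+1)) * ((legendreP k).eval y)^2
      + (1 - y^2) * ((derivative (legendreP k)).eval y)^2
      ≤ (k:ℝ)*((k:ℝ)+1) := by
  set m : ℝ := (k:ℝ)*((k:ℝ)+1) with hm
  set F : ℝ[X] := C m * (legendreP k)^2 + (1 - X^2) * (derivative (legendreP k))^2 with hF
  have hF' : derivative F = 2 * X * (derivative (legendreP k))^2 := by
    rw [hF]
    simp only [derivative_add, derivative_mul, derivative_C, derivative_sub, derivative_one,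
      derivative_sq, derivative_X_pow, derivative_X, zero_mul, zero_add, zero_sub, Nat.cast_ofNat,
      map_ofNat, pow_one, mul_one]
    linear_combination (-2 * derivative (legendreP k)) * (legendre_ode k)
  have hFy : ∀ t : ℝ, F.eval t = m * ((legendreP k).eval t)^2
      + (1 - t^2) * ((derivative (legendreP k)).eval t)^2 := by
    intro t
    simp [hF, eval_add, eval_mul, eval_pow, eval_sub, eval_one]
  have hF1 : F.eval 1 = m := by
    rw [hFy, legendreP_eval_one]
    norm_num
  have hFneg1 : F.eval (-1) = m := by
    rw [hFy, legendreP_eval_negone, ← pow_mul, mul_comm k 2, pow_mul]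
    norm_num
  rcases le_or_gt 0 y with hy0 | hy0
  · have := eval_nonneg_deriv_bound (zero_le_one) (fun x hx => by
      rw [hF']
      simp only [eval_mul, eval_ofNat, eval_X, eval_pow]
      have hx0 : (0:ℝ) ≤ x := le_of_lt hx.1
      positivity) y ⟨hy0, hy.2⟩
    rw [hFy, hF1] at this
    exact this
  · have := eval_nonpos_deriv_bound (by norm_num : (-1:ℝ) ≤ 0) (fun x hx => by
      rw [hF']
      simp only [eval_mul, eval_ofNat, eval_X, eval_pow]
      have hx0 : x ≤ 0 := le_of_lt hx.2
      nlinarith [sq_nonneg ((derivative (legendreP k)).eval x)]) y ⟨hy.1, le_of_lt hy0⟩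
    rw [hFy, hFneg1] at this
    exact this

lemma deriv_bound (k : ℕ) {y : ℝ} (hy : y ∈ Set.Icc (-1:ℝ) 1) :
    |(derivative (legendreP k)).eval y| ≤ (k:ℝ)*((k:ℝ)+1)/2 := by
  rcases Nat.lt_or_ge k 2 with hk2 | hk2
  · interval_cases k
    · have : derivative (legendreP 0) = 0 := by
        unfold legendreP
        simp
      rw [this]
      norm_num
    · have : derivative (legendreP 1) = C 1 := by
        rw [legendreP_deriv]
        have : derivative^[1+1] (((X:ℝ[X])^2-1)^1) = C 2 := by
          show derivative (derivative _) = _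
          simp [derivative_X_pow]; rw [one_add_one_eq_two, map_ofNat]
        rw [this]
        rw [smul_eq_C_mul, ← map_mul]
        norm_num
      rw [this]
      norm_num
  · set m : ℝ := (k:ℝ)*((k:ℝ)+1) with hm
    have hmge : (6:ℝ) ≤ m := by
      rw [hm]
      have : (2:ℝ) ≤ (k:ℝ) := by exact_mod_cast hk2
      nlinarith
    set lam : ℝ := m - 2 with hlam
    have hlampos : 0 < lam := by rw [hlam]; linarith
    set P1 := derivative (legendreP k) with hP1
    set P2 := derivative P1 with hP2
    set G : ℝ[X] := C lam * P1^2 + (1 - X^2) * P2^2 with hG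
    have h' := congrArg derivative (legendre_ode k)
    simp only [derivative_add, derivative_mul, derivative_sub, derivative_one, derivative_C,
      derivative_X_pow, derivative_X, derivative_ofNat, zero_mul, zero_add, zero_sub,
      Nat.cast_ofNat, map_ofNat, pow_one, mul_one] at h'
    norm_num at h'
    have hG' : derivative G = 6 * X * P2^2 := by
      rw [hG]
      simp only [derivative_add, derivative_mul, derivative_C, derivative_sub, derivative_one,
        derivative_sq, derivative_X_pow, derivative_X, derivative_ofNat, zero_mul, zero_add,
        zero_sub, Nat.cast_ofNat, map_ofNat, pow_one, mul_one]
      norm_num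
      have hCl : (C lam : ℝ[X]) = (k:ℝ[X]) * ((k:ℝ[X])+1) - 2 := by
        rw [hlam, hm, map_sub, map_mul, map_add, map_one, C_eq_natCast, map_ofNat]
      rw [hCl]
      linear_combination (-2 * P2) * h'
    have hGy : ∀ t : ℝ, G.eval t = lam * (P1.eval t)^2 + (1 - t^2) * (P2.eval t)^2 := by
      intro t
      simp [hG, eval_add, eval_mul, eval_pow, eval_sub, eval_one]
    have hG1 : G.eval 1 = lam * (m/2)^2 := by
      rw [hGy, hP1, legendreP_deriv_eval_one]
      norm_num
      exact Or.inl (by rw [hm])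
    have hGneg1 : G.eval (-1) = lam * (m/2)^2 := by
      rw [hGy, hP1, legendreP_deriv_eval_negone]
      rw [mul_pow, ← pow_mul, mul_comm (k-1) 2, pow_mul]
      norm_num
      exact Or.inl (by rw [hm])
    have key : G.eval y ≤ lam * (m/2)^2 := by
      rcases le_or_gt 0 y with hy0 | hy0
      · have := eval_nonneg_deriv_bound (zero_le_one) (fun x hx => by
          rw [hG']
          simp only [eval_mul, eval_ofNat, eval_X, eval_pow]
          have hx0 : (0:ℝ) ≤ x := le_of_lt hx.1
          positivity) y ⟨hy0, hy.2⟩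
        rw [hG1] at this
        exact this
      · have := eval_nonpos_deriv_bound (by norm_num : (-1:ℝ) ≤ 0) (fun x hx => by
          rw [hG']
          simp only [eval_mul, eval_ofNat, eval_X, eval_pow]
          have hx0 : x ≤ 0 := le_of_lt hx.2
          nlinarith [sq_nonneg (P2.eval x)]) y ⟨hy.1, le_of_lt hy0⟩
        rw [hGneg1] at this
        exact this
    rw [hGy] at key
    have hsq : (P1.eval y)^2 ≤ (m/2)^2 := by
      have h1y : 0 ≤ 1 - y^2 := by
        rcases hy with ⟨h1, h2⟩
        nlinarith
      have := sq_nonneg (P2.eval y)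
      nlinarith
    exact abs_le_of_sq_le_sq hsq (by linarith)

lemma abs_legendre_le_one (k : ℕ) {y : ℝ} (hy : y ∈ Set.Icc (-1:ℝ) 1) :
    |(legendreP k).eval y| ≤ 1 := by
  rcases Nat.eq_zero_or_pos k with rfl | hk
  · have : legendreP 0 = C 1 := by
      unfold legendreP
      simp
    rw [this]
    norm_num
  · have hs := sum_bound k hy
    have hmpos : (0:ℝ) < (k:ℝ)*((k:ℝ)+1) := by
      have : (1:ℝ) ≤ (k:ℝ) := by exact_mod_cast hk
      nlinarith
    have h1y : 0 ≤ 1 - y^2 := by rcases hy with ⟨h1, h2⟩; nlinarith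
    have hsq : ((legendreP k).eval y)^2 ≤ 1 := by
      nlinarith [sq_nonneg ((derivative (legendreP k)).eval y)]
    exact abs_le_of_sq_le_sq (by nlinarith) zero_le_one

lemma weighted_deriv_bound (k : ℕ) {y : ℝ} (hy : y ∈ Set.Icc (-1:ℝ) 1) :
    |(1 - y^2) * (derivative (legendreP k)).eval y| ≤ Real.sqrt ((k:ℝ)*((k:ℝ)+1)) := by
  have hs := sum_bound k hy
  have h1y : 0 ≤ 1 - y^2 := by rcases hy with ⟨h1, h2⟩; nlinarith
  have h1y' : 1 - y^2 ≤ 1 := by nlinarith [sq_nonneg y]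
  have hmnn : (0:ℝ) ≤ (k:ℝ)*((k:ℝ)+1) := by positivity
  apply abs_le_of_sq_le_sq _ (Real.sqrt_nonneg _)
  rw [Real.sq_sqrt hmnn]
  have h2 : (1 - y^2) * ((derivative (legendreP k)).eval y)^2 ≤ (k:ℝ)*((k:ℝ)+1) := by
    nlinarith [sq_nonneg ((legendreP k).eval y), mul_nonneg (Nat.cast_nonneg k) (sq_nonneg ((legendreP k).eval y))]
  calc ((1 - y^2) * (derivative (legendreP k)).eval y)^2
      = (1-y^2) * ((1-y^2) * ((derivative (legendreP k)).eval y)^2) := by ring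
    _ ≤ 1 * ((k:ℝ)*((k:ℝ)+1)) := by
        apply mul_le_mul h1y' _ _ zero_le_one
        · exact h2
        · positivity
    _ = (k:ℝ)*((k:ℝ)+1) := one_mul _

lemma weighted_deriv2_bound (k : ℕ) {y : ℝ} (hy : y ∈ Set.Icc (-1:ℝ) 1) :
    |(1 - y^2) * (derivative (derivative (legendreP k))).eval y| ≤ 2 * ((k:ℝ)*((k:ℝ)+1)) := by
  have hode := congrArg (eval y) (legendre_ode k)
  simp only [eval_add, eval_mul, eval_sub, eval_pow, eval_X, eval_one, eval_C, eval_ofNat] at hode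
  have hy1 : |y| ≤ 1 := by
    rw [abs_le]; exact ⟨hy.1, hy.2⟩
  have h1 := deriv_bound k hy
  have h2 := abs_legendre_le_one k hy
  have hmnn : (0:ℝ) ≤ (k:ℝ)*((k:ℝ)+1) := by positivity
  have hrw : (1 - y^2) * (derivative (derivative (legendreP k))).eval y
      = 2*y*(derivative (legendreP k)).eval y - ((k:ℝ)*((k:ℝ)+1)) * (legendreP k).eval y := by
    linarith [hode]
  rw [hrw]
  calc |2*y*(derivative (legendreP k)).eval y - ((k:ℝ)*((k:ℝ)+1)) * (legendreP k).eval y|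
      ≤ |2*y*(derivative (legendreP k)).eval y| + |((k:ℝ)*((k:ℝ)+1)) * (legendreP k).eval y| :=
        abs_sub _ _
    _ ≤ 2 * 1 * ((k:ℝ)*((k:ℝ)+1)/2) + ((k:ℝ)*((k:ℝ)+1)) * 1 := by
        rw [abs_mul, abs_mul, abs_mul]
        rw [show |(2:ℝ)| = 2 from by norm_num, abs_of_nonneg hmnn]
        have e1 := abs_nonneg ((derivative (legendreP k)).eval y)
        have e2 := abs_nonneg ((legendreP k).eval y)
        have e3 := abs_nonneg y
        nlinarith [mul_le_mul hy1 h1 e1 zero_le_one, mul_le_mul_of_nonneg_left h2 hmnn]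
    _ = 2 * ((k:ℝ)*((k:ℝ)+1)) := by ring


lemma haff (x : ℝ) : HasDerivAt (fun x : ℝ => 2*x - 1) 2 x := by
  simpa using ((hasDerivAt_id x).const_mul (2:ℝ)).sub_const 1

lemma deriv_SL (k : ℕ) :
    deriv (shiftedLegendre k)
      = fun x => Real.sqrt (2*(k:ℝ)+1) * ((derivative (legendreP k)).eval (2*x-1) * 2) := by
  funext x
  have h2 : HasDerivAt (fun x : ℝ => (legendreP k).eval (2*x-1))
      ((derivative (legendreP k)).eval (2*x-1) * 2) x := by
    exact ((legendreP k).hasDerivAt (2*x-1)).comp x (haff x)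
  have h3 := h2.const_mul (Real.sqrt (2*(k:ℝ)+1))
  have h4 : HasDerivAt (shiftedLegendre k)
      (Real.sqrt (2*(k:ℝ)+1) * ((derivative (legendreP k)).eval (2*x-1) * 2)) x := h3
  exact h4.deriv

lemma deriv2_SL (k : ℕ) :
    deriv (deriv (shiftedLegendre k))
      = fun x => Real.sqrt (2*(k:ℝ)+1)
          * ((derivative (derivative (legendreP k))).eval (2*x-1) * 2 * 2) := by
  rw [deriv_SL]
  funext x
  have h2 : HasDerivAt (fun x : ℝ => (derivative (legendreP k)).eval (2*x-1))
      ((derivative (derivative (legendreP k))).eval (2*x-1) * 2) x := by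
    exact ((derivative (legendreP k)).hasDerivAt (2*x-1)).comp x (haff x)
  have h3 := (h2.mul_const 2).const_mul (Real.sqrt (2*(k:ℝ)+1))
  have h4 : HasDerivAt (fun x => Real.sqrt (2*(k:ℝ)+1)
      * ((derivative (legendreP k)).eval (2*x-1) * 2))
      (Real.sqrt (2*(k:ℝ)+1)
        * ((derivative (derivative (legendreP k))).eval (2*x-1) * 2 * 2)) x := by
    convert h3 using 2 <;> try ring
  exact h4.deriv

theorem stmt16 :
    ∃ C > (0 : ℝ), ∀ k : ℕ, ∀ x ∈ Set.Icc (0 : ℝ) 1,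
      |x * (1 - x) * deriv (shiftedLegendre k) x| ≤ C * (k : ℝ) ^ ((3 : ℝ) / 2) ∧
      |x * (1 - x) * deriv (deriv (shiftedLegendre k)) x| ≤ C * (k : ℝ) ^ ((5 : ℝ) / 2) := by
  refine ⟨16, by norm_num, fun k x hx => ?_⟩
  rw [deriv2_SL, deriv_SL]
  set y : ℝ := 2*x - 1 with hy
  have hyI : y ∈ Set.Icc (-1:ℝ) 1 := by
    constructor <;> [skip; skip] <;> rcases hx with ⟨h1, h2⟩ <;> simp [hy] <;> linarith
  have hxy : x * (1 - x) = (1 - y^2)/4 := by rw [hy]; ring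
  rcases Nat.eq_zero_or_pos k with rfl | hk
  · have hL0 : legendreP 0 = C 1 := by unfold legendreP; simp
    rw [hL0]
    simp
  · have hk1 : (1:ℝ) ≤ (k:ℝ) := by exact_mod_cast hk
    have hknn : (0:ℝ) ≤ (k:ℝ) := by linarith
    have hsk : Real.sqrt (2*(k:ℝ)+1) ≤ 2 * Real.sqrt k := by
      rw [show 2 * Real.sqrt (k:ℝ) = Real.sqrt (4*(k:ℝ)) from by
        rw [show (4:ℝ)*(k:ℝ) = 2^2*(k:ℝ) by ring, Real.sqrt_mul (by positivity),
          Real.sqrt_sq (by norm_num)]]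
      exact Real.sqrt_le_sqrt (by linarith)
    have hsm : Real.sqrt ((k:ℝ)*((k:ℝ)+1)) ≤ 2 * (k:ℝ) := by
      rw [show 2 * (k:ℝ) = Real.sqrt ((2*(k:ℝ))^2) from by rw [Real.sqrt_sq (by positivity)]]
      exact Real.sqrt_le_sqrt (by nlinarith)
    have hsknn : 0 ≤ Real.sqrt (k:ℝ) := Real.sqrt_nonneg _
    have hsnn : 0 ≤ Real.sqrt (2*(k:ℝ)+1) := Real.sqrt_nonneg _
    have hk32 : ((k:ℝ)) ^ ((3:ℝ)/2) = (k:ℝ) * Real.sqrt k := by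
      rw [show (3:ℝ)/2 = 1 + 1/2 by norm_num, Real.rpow_add (by linarith), Real.rpow_one,
        ← Real.sqrt_eq_rpow]
    have hk52 : ((k:ℝ)) ^ ((5:ℝ)/2) = (k:ℝ)^2 * Real.sqrt k := by
      rw [show (5:ℝ)/2 = 2 + 1/2 by norm_num, Real.rpow_add (by linarith),
        ← Real.sqrt_eq_rpow, show ((2:ℝ):ℝ) = ((2:ℕ):ℝ) by norm_num, Real.rpow_natCast]
    have hw1 := weighted_deriv_bound k hyI
    have hw2 := weighted_deriv2_bound k hyI
    constructor
    · have heq : x * (1 - x) * (Real.sqrt (2*(k:ℝ)+1)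
          * ((derivative (legendreP k)).eval (2*x-1) * 2))
          = Real.sqrt (2*(k:ℝ)+1) / 2 * ((1 - y^2) * (derivative (legendreP k)).eval y) := by
        rw [hy]
        ring
      rw [heq, abs_mul, hk32, abs_of_nonneg (by positivity : (0:ℝ) ≤ Real.sqrt (2*(k:ℝ)+1) / 2)]
      calc Real.sqrt (2*(k:ℝ)+1) / 2 * |(1 - y^2) * (derivative (legendreP k)).eval y|
          ≤ (2 * Real.sqrt k) / 2 * Real.sqrt ((k:ℝ)*((k:ℝ)+1)) := by
            apply mul_le_mul (by linarith) hw1 (abs_nonneg _) (by positivity)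
        _ ≤ Real.sqrt k * (2 * (k:ℝ)) := by
            rw [show (2 * Real.sqrt (k:ℝ)) / 2 = Real.sqrt (k:ℝ) by ring]
            exact mul_le_mul_of_nonneg_left hsm hsknn
        _ ≤ 16 * ((k:ℝ) * Real.sqrt k) := by nlinarith
    · have heq : x * (1 - x) * (Real.sqrt (2*(k:ℝ)+1)
          * ((derivative (derivative (legendreP k))).eval (2*x-1) * 2 * 2))
          = Real.sqrt (2*(k:ℝ)+1)
            * ((1 - y^2) * (derivative (derivative (legendreP k))).eval y) := by
        rw [hy]
        ring
      rw [heq, abs_mul, hk52, abs_of_nonneg hsnn]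
      calc Real.sqrt (2*(k:ℝ)+1)
            * |(1 - y^2) * (derivative (derivative (legendreP k))).eval y|
          ≤ (2 * Real.sqrt k) * (2 * ((k:ℝ)*((k:ℝ)+1))) := by
            apply mul_le_mul hsk hw2 (abs_nonneg _) (by positivity)
        _ ≤ 16 * ((k:ℝ)^2 * Real.sqrt k) := by
            nlinarith [mul_le_mul_of_nonneg_right
              (show 4*((k:ℝ)*((k:ℝ)+1)) ≤ 16*(k:ℝ)^2 by nlinarith) hsknn]
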